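/- Any two minimal generating sets of a fixed G-transfer system T have the same cardinality. Consequently there is a well-defined map m : Tr(G) → ℕ assigning to each transfer system the size of any of its minimal generating sets. -/

import Mathlib

/-- Conjugate of a subgroup: `H^g`. -/
def conjSub {G : Type*} [Group G] (g : G) (H : Subgroup G) : Subgroup G :=
  H.map (MulAut.conj g).toMonoidHom

/-- A `G`-transfer system: a set of pairs `(K, H)` of subgroups with `K ≤ H`, containing all
identity pairs and closed under composition, conjugation, and restriction. -/
def IsTransferSystem {G : Type*} [Group G] (T : Set (Subgroup G × Subgroup G)) : Prop :=
  (∀ p ∈ T, p.1 ≤ p.2) ∧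
  (∀ H : Subgroup G, (H, H) ∈ T) ∧
  (∀ L K H : Subgroup G, (L, K) ∈ T → (K, H) ∈ T → (L, H) ∈ T) ∧
  (∀ K H : Subgroup G, (K, H) ∈ T → ∀ g : G, (conjSub g K, conjSub g H) ∈ T) ∧
  (∀ K H : Subgroup G, (K, H) ∈ T → ∀ L : Subgroup G, L ≤ H → (K ⊓ L, L) ∈ T)

/-- Rubin's closure: the smallest transfer system containing `S`. -/
def tsGen {G : Type*} [Group G] (S : Set (Subgroup G × Subgroup G)) :
    Set (Subgroup G × Subgroup G) :=
  ⋂₀ {T | IsTransferSystem T ∧ S ⊆ T}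

/-- `S` is a minimal generating set (of non-identity intervals) for the transfer system `T`. -/
def IsMinGenSet {G : Type*} [Group G] (S T : Set (Subgroup G × Subgroup G)) : Prop :=
  S ⊆ T ∧ (∀ p ∈ S, p.1 ≠ p.2) ∧ tsGen S = T ∧ ∀ s ∈ S, tsGen (S \ {s}) ⊂ T

/-- Total exponent (number of prime factors with multiplicity) of `n`. -/
def bigOmega (n : ℕ) : ℕ := n.primeFactorsList.length

set_option linter.unusedSectionVars false
namespace TSProof

variable {G : Type*} [Group G]

lemma mem_conjSub {g x : G} {K : Subgroup G} : x ∈ conjSub g K ↔ g⁻¹ * x * g ∈ K := by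
  constructor
  · rintro ⟨k, hk, rfl⟩
    simpa [MulAut.conj_apply, mul_assoc] using hk
  · intro h
    exact ⟨g⁻¹ * x * g, h, by simp [MulAut.conj_apply, mul_assoc]⟩

lemma conjSub_conjSub (g h : G) (K : Subgroup G) :
    conjSub g (conjSub h K) = conjSub (g * h) K := by
  ext x
  simp only [mem_conjSub]
  constructor <;> intro hx
  · have : (g * h)⁻¹ * x * (g * h) = h⁻¹ * (g⁻¹ * x * g) * h := by group
    rw [this]; exact hx
  · have : h⁻¹ * (g⁻¹ * x * g) * h = (g * h)⁻¹ * x * (g * h) := by group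
    rw [this]; exact hx

lemma conjSub_one (K : Subgroup G) : conjSub (1 : G) K = K := by
  ext x; simp [mem_conjSub]

lemma conjSub_mono {K H : Subgroup G} (g : G) (h : K ≤ H) : conjSub g K ≤ conjSub g H := by
  intro x hx
  rw [mem_conjSub] at hx ⊢
  exact h hx

lemma conjSub_inf (g : G) (K L : Subgroup G) :
    conjSub g (K ⊓ L) = conjSub g K ⊓ conjSub g L := by
  ext x; simp [mem_conjSub, Subgroup.mem_inf]

lemma card_conjSub (g : G) (K : Subgroup G) : Nat.card (conjSub g K) = Nat.card K := by
  have e := Subgroup.equivMapOfInjective K (MulAut.conj g).toMonoidHom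
    (by intro a b hab; exact (MulAut.conj g).injective hab)
  exact (Nat.card_congr e.toEquiv).symm

variable [Finite G]

lemma card_le_of_le {K H : Subgroup G} (h : K ≤ H) : Nat.card K ≤ Nat.card H := by
  have h1 := Nat.card_coe_set_eq (K : Set G)
  have h2 := Nat.card_coe_set_eq (H : Set G)
  rw [show Nat.card ↥K = Nat.card (K : Set G) from rfl, show Nat.card ↥H = Nat.card (H : Set G) from rfl, h1, h2]
  exact Set.ncard_le_ncard h (Set.toFinite _)

lemma card_lt_of_lt {K H : Subgroup G} (h : K ≤ H) (hne : K ≠ H) :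
    Nat.card K < Nat.card H := by
  have h1 := Nat.card_coe_set_eq (K : Set G)
  have h2 := Nat.card_coe_set_eq (H : Set G)
  rw [show Nat.card ↥K = Nat.card (K : Set G) from rfl, show Nat.card ↥H = Nat.card (H : Set G) from rfl, h1, h2]
  refine Set.ncard_lt_ncard ⟨h, fun hsub => hne ?_⟩ (Set.toFinite _)
  exact le_antisymm h fun x hx => hsub hx

lemma eq_of_le_of_card_le {K H : Subgroup G} (h : K ≤ H) (hc : Nat.card H ≤ Nat.card K) :
    K = H := by
  by_contra hne
  exact absurd (card_lt_of_lt h hne) (not_lt.mpr hc)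


abbrev SP (G : Type*) [Group G] := Subgroup G × Subgroup G

def cnj (g : G) (p : SP G) : SP G := (conjSub g p.1, conjSub g p.2)

lemma cnj_cnj (g h : G) (p : SP G) : cnj g (cnj h p) = cnj (g * h) p := by
  simp [cnj, conjSub_conjSub]

lemma cnj_one (p : SP G) : cnj (1 : G) p = p := by
  simp [cnj, conjSub_one]

/-- The set of restrictions of conjugates of `t`. -/
def Rc (t : SP G) : Set (SP G) :=
  {p | ∃ g L, L ≤ conjSub g t.2 ∧ p = (conjSub g t.1 ⊓ L, L)}

lemma mem_Rc_self {t : SP G} (h : t.1 ≤ t.2) : t ∈ Rc t := by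
  refine ⟨1, t.2, by rw [conjSub_one], ?_⟩
  rw [conjSub_one]
  exact Prod.ext (by simp [inf_eq_left.mpr h]) rfl

lemma Rc_le {t p : SP G} (hp : p ∈ Rc t) : p.1 ≤ p.2 := by
  obtain ⟨g, L, hL, rfl⟩ := hp
  exact inf_le_right

lemma Rc_cnj_mem {t p : SP G} (hp : p ∈ Rc t) (k : G) : cnj k p ∈ Rc t := by
  obtain ⟨g, L, hL, rfl⟩ := hp
  refine ⟨k * g, conjSub k L, ?_, ?_⟩
  · rw [← conjSub_conjSub]; exact conjSub_mono k hL
  · simp [cnj, conjSub_inf, conjSub_conjSub]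

lemma Rc_trans {t q p : SP G} (hp : p ∈ Rc q) (hq : q ∈ Rc t) : p ∈ Rc t := by
  obtain ⟨a, L, hL, rfl⟩ := hp
  obtain ⟨b, M, hM, hq2⟩ := hq
  have h1 : q.1 = conjSub b t.1 ⊓ M := by rw [hq2]
  have h2 : q.2 = M := by rw [hq2]
  refine ⟨a * b, L, ?_, ?_⟩
  · rw [← conjSub_conjSub]
    exact le_trans (h2 ▸ hL) (conjSub_mono a hM)
  · have hLM : L ≤ conjSub a M := h2 ▸ hL
    refine Prod.ext ?_ rfl
    show conjSub a q.1 ⊓ L = conjSub (a * b) t.1 ⊓ L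
    rw [h1, conjSub_inf, conjSub_conjSub, inf_assoc, inf_eq_right.mpr hLM]

lemma Rc_restrict {t p : SP G} (hp : p ∈ Rc t) {L : Subgroup G} (hL : L ≤ p.2) :
    (p.1 ⊓ L, L) ∈ Rc t := by
  obtain ⟨g, B, hB, rfl⟩ := hp
  simp only at hL
  refine ⟨g, L, le_trans hL hB, ?_⟩
  refine Prod.ext ?_ rfl
  show conjSub g t.1 ⊓ B ⊓ L = conjSub g t.1 ⊓ L
  rw [inf_assoc, inf_eq_right.mpr hL]

lemma Rc_card_fst {t p : SP G} [Finite G] (hp : p ∈ Rc t) :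
    Nat.card p.1 ≤ Nat.card t.1 := by
  obtain ⟨g, L, hL, rfl⟩ := hp
  calc Nat.card ((conjSub g t.1 ⊓ L : Subgroup G)) ≤ Nat.card (conjSub g t.1) :=
        card_le_of_le inf_le_left
    _ = Nat.card t.1 := card_conjSub g t.1

lemma Rc_card_snd {t p : SP G} [Finite G] (hp : p ∈ Rc t) :
    Nat.card p.2 ≤ Nat.card t.2 := by
  obtain ⟨g, L, hL, rfl⟩ := hp
  calc Nat.card ((L : Subgroup G)) ≤ Nat.card (conjSub g t.2) := card_le_of_le hL
    _ = Nat.card t.2 := card_conjSub g t.2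

/-- If `m` is a restricted conjugate of `u` of (at least) the same size, they are conjugate. -/
lemma cnj_of_Rc_card [Finite G] {u m : SP G} (hm : m ∈ Rc u) (hu : u.1 ≤ u.2)
    (hc : Nat.card u.2 ≤ Nat.card m.2) : ∃ g, u = cnj g m := by
  obtain ⟨g, L, hL, rfl⟩ := hm
  have hLe : L = conjSub g u.2 := by
    refine eq_of_le_of_card_le hL ?_
    rw [card_conjSub]
    exact hc
  have hfst : conjSub g u.1 ⊓ L = conjSub g u.1 := by
    rw [hLe]
    exact inf_eq_left.mpr (conjSub_mono g hu)
  refine ⟨g⁻¹, ?_⟩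
  have heq : ((conjSub g u.1 ⊓ L, L) : SP G) = cnj g u := by
    refine Prod.ext ?_ ?_
    · show conjSub g u.1 ⊓ L = conjSub g u.1
      exact hfst
    · show L = conjSub g u.2
      exact hLe
  rw [heq, cnj_cnj, inv_mul_cancel, cnj_one]


section TS
variable {T S : Set (SP G)}

lemma isTS_top : IsTransferSystem {p : SP G | p.1 ≤ p.2} := by
  refine ⟨fun p hp => hp, fun H => le_refl H, fun L K H h1 h2 => show L ≤ H from le_trans h1 h2,
    fun K H h g => show conjSub g K ≤ conjSub g H from conjSub_mono g h, fun K H h L hL => show K ⊓ L ≤ L from inf_le_right⟩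

lemma subset_tsGen : S ⊆ tsGen S := by
  intro p hp
  exact fun T hT => hT.2 hp

lemma tsGen_le (hT : IsTransferSystem T) (h : S ⊆ T) : tsGen S ⊆ T :=
  fun p hp => hp T ⟨hT, h⟩

lemma isTS_tsGen (hS : ∀ p ∈ S, p.1 ≤ p.2) : IsTransferSystem (tsGen S) := by
  refine ⟨?_, ?_, ?_, ?_, ?_⟩
  · intro p hp
    exact hp {p : SP G | p.1 ≤ p.2} ⟨isTS_top, hS⟩
  · intro H T hT
    exact hT.1.2.1 H
  · intro L K H h1 h2 T hT
    exact hT.1.2.2.1 L K H (h1 T hT) (h2 T hT)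
  · intro K H h g T hT
    exact hT.1.2.2.2.1 K H (h T hT) g
  · intro K H h L hL T hT
    exact hT.1.2.2.2.2 K H (h T hT) L hL

lemma Rc_subset_of_mem (hT : IsTransferSystem T) {t : SP G} (ht : t ∈ T) : Rc t ⊆ T := by
  rintro p ⟨g, L, hL, rfl⟩
  have h1 : (conjSub g t.1, conjSub g t.2) ∈ T := hT.2.2.2.1 t.1 t.2 ht g
  exact hT.2.2.2.2 _ _ h1 L hL

/-- One generation step: a restricted conjugate of a generator. -/
def StepRel (S : Set (SP G)) : Subgroup G → Subgroup G → Prop :=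
  fun A B => ∃ s ∈ S, ((A, B) : SP G) ∈ Rc s

/-- The explicit description of the transfer system generated by `S`. -/
def ESet (S : Set (SP G)) : Set (SP G) :=
  {p | p.1 = p.2 ∨ Relation.TransGen (StepRel S) p.1 p.2}

lemma StepRel_le {A B : Subgroup G} (h : StepRel S A B) : A ≤ B := by
  obtain ⟨s, _, hs⟩ := h
  exact Rc_le hs

lemma TransGen_le {A B : Subgroup G} (h : Relation.TransGen (StepRel S) A B) : A ≤ B := by
  induction h with
  | single h => exact StepRel_le h
  | tail _ h ih => exact le_trans ih (StepRel_le h)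

lemma TransGen_restrict {A B : Subgroup G} (h : Relation.TransGen (StepRel S) A B) :
    ∀ L ≤ B, Relation.TransGen (StepRel S) (A ⊓ L) L := by
  induction h with
  | single h =>
    intro L hL
    obtain ⟨s, hsS, hs⟩ := h
    exact Relation.TransGen.single ⟨s, hsS, Rc_restrict hs hL⟩
  | @tail B' B htg h ih =>
    intro L hL
    obtain ⟨s, hsS, hs⟩ := h
    have hstep : StepRel S (B' ⊓ L) L := ⟨s, hsS, Rc_restrict hs hL⟩
    have hAB' : A ≤ B' := TransGen_le htg
    have ihx := ih (B' ⊓ L) inf_le_left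
    have hre : A ⊓ (B' ⊓ L) = A ⊓ L := by
      rw [← inf_assoc, inf_eq_left.mpr hAB']
    rw [hre] at ihx
    by_cases hcase : A ⊓ L = B' ⊓ L
    · rw [hcase]
      exact Relation.TransGen.single hstep
    · exact Relation.TransGen.tail ihx hstep

lemma isTS_ESet : IsTransferSystem (ESet S) := by
  refine ⟨?_, ?_, ?_, ?_, ?_⟩
  · rintro p (h | h)
    · exact le_of_eq h
    · exact TransGen_le h
  · intro H
    exact Or.inl rfl
  · rintro L K H (h1 | h1) (h2 | h2)
    · exact Or.inl (h1.trans h2)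
    · refine Or.inr ?_
      have h1' : L = K := h1
      rw [h1']; exact h2
    · refine Or.inr ?_
      have h2' : K = H := h2
      rw [← h2']; exact h1
    · exact Or.inr (h1.trans h2)
  · rintro K H (h | h) g
    · refine Or.inl ?_
      have h' : K = H := h
      show conjSub g K = conjSub g H
      rw [h']
    · refine Or.inr ?_
      exact Relation.TransGen.lift (p := StepRel S) (conjSub g)
        (fun A B hAB => by
          obtain ⟨s, hsS, hs⟩ := hAB
          exact ⟨s, hsS, by simpa [cnj] using Rc_cnj_mem hs g⟩) _ _ h
  · rintro K H (h | h) L hL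
    · refine Or.inl ?_
      show K ⊓ L = L
      simp only at h
      rw [h, inf_eq_right.mpr hL]
    · exact Or.inr (TransGen_restrict h L hL)

lemma subset_ESet (hS : ∀ p ∈ S, p.1 ≤ p.2) : S ⊆ ESet S := by
  intro s hs
  by_cases h : s.1 = s.2
  · exact Or.inl h
  · refine Or.inr (Relation.TransGen.single ⟨s, hs, ?_⟩)
    have := mem_Rc_self (hS s hs)
    simpa using this

lemma tsGen_eq_ESet (hS : ∀ p ∈ S, p.1 ≤ p.2) : tsGen S = ESet S := by
  apply subset_antisymm
  · exact tsGen_le isTS_ESet (subset_ESet hS)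
  · rintro p (h | h)
    · have := (isTS_tsGen hS).2.1 p.1
      rwa [show ((p.1, p.1) : SP G) = p from Prod.ext rfl h] at this
    · have key : ∀ A B : Subgroup G, Relation.TransGen (StepRel S) A B →
          ((A, B) : SP G) ∈ tsGen S := by
        intro A B htg
        induction htg with
        | single h =>
          obtain ⟨s, hsS, hs⟩ := h
          exact Rc_subset_of_mem (isTS_tsGen hS) (subset_tsGen hsS) hs
        | @tail B' B _ h ih =>
          obtain ⟨s, hsS, hs⟩ := h
          exact (isTS_tsGen hS).2.2.1 A B' B ih
            (Rc_subset_of_mem (isTS_tsGen hS) (subset_tsGen hsS) hs)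
      have := key p.1 p.2 h
      simpa using this


/-- `p` is an indecomposable non-identity relation of `T`. -/
def Indec (T : Set (SP G)) (p : SP G) : Prop :=
  p ∈ T ∧ p.1 ≠ p.2 ∧ ∀ M, (p.1, M) ∈ T → (M, p.2) ∈ T → M = p.1 ∨ M = p.2

/-- `m` is a maximal indecomposable: any indecomposable above it is conjugate to it. -/
def Maxi (T : Set (SP G)) (m : SP G) : Prop :=
  Indec T m ∧ ∀ u, Indec T u → m ∈ Rc u → ∃ g, u = cnj g m

/-- Any indecomposable of a transfer system containing `tsGen S` that lies in `tsGen S`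
is a restricted conjugate of some generator. -/
lemma indec_mem_Rc (hSle : ∀ p ∈ S, p.1 ≤ p.2) (hT : IsTransferSystem T)
    (hsub : tsGen S ⊆ T) {p : SP G} (hp : p ∈ tsGen S) (hne : p.1 ≠ p.2)
    (hind : ∀ M, (p.1, M) ∈ T → (M, p.2) ∈ T → M = p.1 ∨ M = p.2) :
    ∃ s ∈ S, p ∈ Rc s := by
  rw [tsGen_eq_ESet hSle] at hp
  rcases hp with h | htg
  · exact absurd h hne
  have claim : ∀ A B : Subgroup G, Relation.TransGen (StepRel S) A B →
      A = B ∨ (∃ s ∈ S, ((A, B) : SP G) ∈ Rc s) ∨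
      ∃ M, M ≠ A ∧ M ≠ B ∧ ((A, M) : SP G) ∈ tsGen S ∧ ((M, B) : SP G) ∈ tsGen S := by
    intro A B htg
    induction htg with
    | single h => exact Or.inr (Or.inl h)
    | @tail B' B htg h ih =>
      by_cases hAB' : A = B'
      · obtain ⟨s, hsS, hs⟩ := h
        exact Or.inr (Or.inl ⟨s, hsS, by rw [hAB']; exact hs⟩)
      by_cases hB'B : B' = B
      · subst hB'B; exact ih
      rcases ih with ih1 | ih2 | ⟨M, hM1, hM2, hMa, hMb⟩
      · exact absurd ih1 hAB'
      · obtain ⟨s, hsS, hs⟩ := ih2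
        obtain ⟨s', hs'S, hs'⟩ := h
        refine Or.inr (Or.inr ⟨B', Ne.symm hAB', hB'B, ?_, ?_⟩)
        · exact Rc_subset_of_mem (isTS_tsGen hSle) (subset_tsGen hsS) hs
        · exact Rc_subset_of_mem (isTS_tsGen hSle) (subset_tsGen hs'S) hs'
      · obtain ⟨s', hs'S, hs'⟩ := h
        have hB'Bmem : ((B', B) : SP G) ∈ tsGen S :=
          Rc_subset_of_mem (isTS_tsGen hSle) (subset_tsGen hs'S) hs'
        refine Or.inr (Or.inr ⟨M, hM1, ?_, hMa, ?_⟩)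
        · intro hMB
          apply hB'B
          refine le_antisymm ?_ ?_
          · exact Rc_le hs'
          · rw [← hMB] at *
            exact (isTS_tsGen hSle).1 _ hMb
        · exact (isTS_tsGen hSle).2.2.1 M B' B hMb hB'Bmem
  rcases claim p.1 p.2 htg with h1 | h2 | ⟨M, hM1, hM2, hMa, hMb⟩
  · exact absurd h1 hne
  · obtain ⟨s, hsS, hs⟩ := h2
    exact ⟨s, hsS, by rwa [Prod.mk.eta] at hs⟩
  · rcases hind M (hsub hMa) (hsub hMb) with h | h
    · exact absurd h hM1
    · exact absurd h hM2

/-- If every indecomposable of `T` lies in a transfer system `T'`, then `T ⊆ T'`. -/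
lemma subset_of_indec_subset (hT : IsTransferSystem T) {T' : Set (SP G)}
    (hT' : IsTransferSystem T') (h : ∀ p, Indec T p → p ∈ T') : T ⊆ T' := by
  have key : ∀ n, ∀ p : SP G, p ∈ T → Nat.card p.2 - Nat.card p.1 < n → p ∈ T' := by
    intro n
    induction n with
    | zero => exact fun p _ h => absurd h (Nat.not_lt_zero _)
    | succ n ih =>
      intro p hp hcard
      by_cases hne : p.1 = p.2
      · have := hT'.2.1 p.1
        rwa [show ((p.1, p.1) : SP G) = p from Prod.ext rfl hne] at this
      by_cases hind : ∀ M, (p.1, M) ∈ T → (M, p.2) ∈ T → M = p.1 ∨ M = p.2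
      · exact h p ⟨hp, hne, hind⟩
      · push_neg at hind
        obtain ⟨M, h1, h2, hM1, hM2⟩ := hind
        have hle1 : p.1 ≤ M := hT.1 _ h1
        have hle2 : M ≤ p.2 := hT.1 _ h2
        have c1 : Nat.card p.1 < Nat.card M := card_lt_of_lt hle1 (Ne.symm hM1)
        have c2 : Nat.card M < Nat.card p.2 := card_lt_of_lt hle2 hM2
        have r1 : ((p.1, M) : SP G) ∈ T' :=
          ih _ h1 (show Nat.card M - Nat.card p.1 < n by omega)
        have r2 : ((M, p.2) : SP G) ∈ T' :=
          ih _ h2 (show Nat.card p.2 - Nat.card M < n by omega)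
        have := hT'.2.2.1 p.1 M p.2 r1 r2
        rwa [Prod.mk.eta] at this
  exact fun p hp => key _ p hp (Nat.lt_succ_self _)

/-- Splitting: an indecomposable restricted conjugate of `t` is a restricted conjugate of
either half of any decomposition of `t`. -/
lemma split (hT : IsTransferSystem T) {t : SP G} {M : Subgroup G}
    (h1 : (t.1, M) ∈ T) (h2 : (M, t.2) ∈ T) (hA : t.1 ≤ M)
    {m : SP G} (hm : m ∈ Rc t) (hmind : Indec T m) :
    m ∈ Rc ((t.1, M) : SP G) ∨ m ∈ Rc ((M, t.2) : SP G) := by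
  obtain ⟨g, L, hL, hmeq⟩ := hm
  set N := conjSub g M ⊓ L with hN
  have hconjAM := hT.2.2.2.1 t.1 M h1 g
  have hconjMB := hT.2.2.2.1 M t.2 h2 g
  have hmem1 : ((conjSub g t.1 ⊓ N, N) : SP G) ∈ T :=
    hT.2.2.2.2 _ _ hconjAM N inf_le_left
  have hfst : conjSub g t.1 ⊓ N = conjSub g t.1 ⊓ L := by
    rw [hN, ← inf_assoc, inf_eq_left.mpr (conjSub_mono g hA)]
  have hmem2 : ((N, L) : SP G) ∈ T := hT.2.2.2.2 _ _ hconjMB L hL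
  have hm1 : m.1 = conjSub g t.1 ⊓ L := by rw [hmeq]
  have hm2 : m.2 = L := by rw [hmeq]
  have hmemA : ((m.1, N) : SP G) ∈ T := by
    rw [hm1, ← hfst]; exact hmem1
  have hmemB : ((N, m.2) : SP G) ∈ T := by rw [hm2]; exact hmem2
  rcases hmind.2.2 N hmemA hmemB with hNe | hNe
  · right
    refine ⟨g, L, hL, ?_⟩
    refine Prod.ext ?_ ?_
    · show m.1 = conjSub g M ⊓ L
      rw [← hNe]
    · exact hm2
  · left
    have hLM : L ≤ conjSub g M := by
      rw [hm2] at hNe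
      exact inf_eq_right.mp (hN ▸ hNe)
    exact ⟨g, L, hLM, hmeq⟩


/-- Lemma D: if a maximal indecomposable `m` is a restricted conjugate of `t ∈ T`, then the
bottom of `t` embeds (up to conjugacy) into the bottom of `m`. -/
lemma lemD (hT : IsTransferSystem T) :
    ∀ n, ∀ t : SP G, t ∈ T → t.1 ≠ t.2 → Nat.card t.2 - Nat.card t.1 ≤ n →
    ∀ m : SP G, Maxi T m → m ∈ Rc t → ∃ g, t.1 ≤ conjSub g m.1 := by
  intro n
  induction n with
  | zero =>
    intro t ht hne hcard
    have hlt := card_lt_of_lt (hT.1 t ht) hne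
    omega
  | succ n ih =>
    intro t ht hne hcard m hm hmRc
    by_cases hind : ∀ M, (t.1, M) ∈ T → (M, t.2) ∈ T → M = t.1 ∨ M = t.2
    · obtain ⟨g, hg⟩ := hm.2 t ⟨ht, hne, hind⟩ hmRc
      refine ⟨g, le_of_eq ?_⟩
      rw [hg]; rfl
    · push_neg at hind
      obtain ⟨M, h1, h2, hM1, hM2⟩ := hind
      have hle1 : t.1 ≤ M := hT.1 _ h1
      have hle2 : M ≤ t.2 := hT.1 _ h2
      have c1 : Nat.card t.1 < Nat.card M := card_lt_of_lt hle1 (Ne.symm hM1)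
      have c2 : Nat.card M < Nat.card t.2 := card_lt_of_lt hle2 hM2
      rcases split hT h1 h2 hle1 hmRc hm.1 with hc | hc
      · exact ih (t.1, M) h1 (Ne.symm hM1)
          (show Nat.card M - Nat.card t.1 ≤ n by omega) m hm hc
      · obtain ⟨g, hg⟩ := ih (M, t.2) h2 hM2
          (show Nat.card t.2 - Nat.card M ≤ n by omega) m hm hc
        exact ⟨g, le_trans hle1 hg⟩

/-- Lemma V2: any two maximal indecomposables that are restricted conjugates of a common
`t ∈ T` are conjugate. -/
lemma lemV2 (hT : IsTransferSystem T) :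
    ∀ n, ∀ t : SP G, t ∈ T → t.1 ≠ t.2 → Nat.card t.2 - Nat.card t.1 ≤ n →
    ∀ m1 m2 : SP G, Maxi T m1 → Maxi T m2 → m1 ∈ Rc t → m2 ∈ Rc t →
    ∃ g, m2 = cnj g m1 := by
  intro n
  induction n with
  | zero =>
    intro t ht hne hcard
    have hlt := card_lt_of_lt (hT.1 t ht) hne
    omega
  | succ n ih =>
    intro t ht hne hcard m1 m2 hm1 hm2 h1Rc h2Rc
    by_cases hind : ∀ M, (t.1, M) ∈ T → (M, t.2) ∈ T → M = t.1 ∨ M = t.2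
    · obtain ⟨g, hg⟩ := hm1.2 t ⟨ht, hne, hind⟩ h1Rc
      obtain ⟨h, hh⟩ := hm2.2 t ⟨ht, hne, hind⟩ h2Rc
      refine ⟨h⁻¹ * g, ?_⟩
      have e1 : cnj h⁻¹ (cnj h m2) = m2 := by rw [cnj_cnj, inv_mul_cancel, cnj_one]
      rw [← e1, ← hh, hg, cnj_cnj]
    · push_neg at hind
      obtain ⟨M, hd1, hd2, hM1, hM2⟩ := hind
      have hle1 : t.1 ≤ M := hT.1 _ hd1
      have hle2 : M ≤ t.2 := hT.1 _ hd2
      have c1 : Nat.card t.1 < Nat.card M := card_lt_of_lt hle1 (Ne.symm hM1)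
      have c2 : Nat.card M < Nat.card t.2 := card_lt_of_lt hle2 hM2
      have hcontra : ∀ m : SP G, Maxi T m → m ∈ Rc t →
          m ∈ Rc ((M, t.2) : SP G) → False := by
        intro m hm hmt hmMB
        obtain ⟨g, hg⟩ := lemD hT (Nat.card t.2 - Nat.card M) (M, t.2) hd2 hM2
          (le_refl _) m hm hmMB
        have hcg : Nat.card M ≤ Nat.card m.1 := by
          have := card_le_of_le hg
          rwa [card_conjSub] at this
        have hfst := Rc_card_fst hmt
        omega
      rcases split hT hd1 hd2 hle1 h1Rc hm1.1 with hc1 | hc1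
      · rcases split hT hd1 hd2 hle1 h2Rc hm2.1 with hc2 | hc2
        · exact ih (t.1, M) hd1 (Ne.symm hM1)
            (show Nat.card M - Nat.card t.1 ≤ n by omega) m1 m2 hm1 hm2 hc1 hc2
        · exact (hcontra m2 hm2 h2Rc hc2).elim
      · exact (hcontra m1 hm1 h1Rc hc1).elim


/-- Every element of a minimal generating set has a maximal indecomposable witness that is a
restricted conjugate of it and of no other generator. -/
lemma exists_witness (hT : IsTransferSystem T) (hS : IsMinGenSet S T) {s : SP G}
    (hs : s ∈ S) :
    ∃ m : SP G, Maxi T m ∧ m ∈ Rc s ∧ ∀ s' ∈ S, s' ≠ s → m ∉ Rc s' := by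
  obtain ⟨hST, hSne, hgen, hmin⟩ := hS
  have hleg : ∀ p ∈ S, p.1 ≤ p.2 := fun p hp => hT.1 p (hST hp)
  have hleg' : ∀ p ∈ S \ {s}, p.1 ≤ p.2 := fun p hp => hleg p hp.1
  have hTS' := isTS_tsGen hleg'
  have hss := hmin s hs
  have hex : ∃ p0 : SP G, Indec T p0 ∧ p0 ∉ tsGen (S \ {s}) := by
    by_contra hcon
    push_neg at hcon
    have : T ⊆ tsGen (S \ {s}) :=
      subset_of_indec_subset hT hTS' (fun p hp => hcon p hp)
    exact hss.not_subset this
  obtain ⟨p0, hp0ind, hp0not⟩ := hex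
  have hp0T : p0 ∈ T := hp0ind.1
  have hnotRc : ∀ s' ∈ S, s' ≠ s → p0 ∉ Rc s' := by
    intro s' hs' hne hmem
    refine hp0not (Rc_subset_of_mem hTS' (subset_tsGen ?_) hmem)
    exact ⟨hs', by simpa using hne⟩
  set A : Set (SP G) := {q | Indec T q ∧ p0 ∈ Rc q} with hA
  have hAne : A.Nonempty := ⟨p0, hp0ind, mem_Rc_self (hT.1 p0 hp0T)⟩
  obtain ⟨m, hmA, hmmax⟩ := Set.Finite.exists_maximalFor
    (fun q : SP G => Nat.card q.2) A (Set.toFinite A) hAne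
  have hmax : ∀ u, Indec T u → m ∈ Rc u → ∃ g, u = cnj g m := by
    intro u hu hmu
    have huA : u ∈ A := ⟨hu, Rc_trans hmA.2 hmu⟩
    have hle : Nat.card u.2 ≤ Nat.card m.2 := by
      by_contra hlt
      push_neg at hlt
      have h2 := Rc_card_snd hmu
      have : Nat.card u.2 ≤ Nat.card m.2 := hmmax huA (le_of_lt hlt)
      omega
    exact cnj_of_Rc_card hmu (hT.1 u hu.1) hle
  have hmT : m ∈ T := hmA.1.1
  obtain ⟨s₁, hs₁, hmRcs⟩ := indec_mem_Rc hleg hT (hgen ▸ Set.Subset.rfl)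
    (by rw [hgen]; exact hmT) hmA.1.2.1 hmA.1.2.2
  have hs₁s : s₁ = s := by
    by_contra hne
    exact hnotRc s₁ hs₁ hne (Rc_trans hmA.2 hmRcs)
  refine ⟨m, ⟨hmA.1, hmax⟩, hs₁s ▸ hmRcs, ?_⟩
  intro s' hs' hne hmem
  exact hnotRc s' hs' hne (Rc_trans hmA.2 hmem)

variable {R : Set (SP G)}

lemma ncard_le_of_minGen (hT : IsTransferSystem T) (hS : IsMinGenSet S T)
    (hR : IsMinGenSet R T) : S.ncard ≤ R.ncard := by
  classical
  have hwS : ∀ s ∈ S, ∃ m : SP G, Maxi T m ∧ m ∈ Rc s ∧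
      ∀ s' ∈ S, s' ≠ s → m ∉ Rc s' := fun s hs => exists_witness hT hS hs
  choose! wS hw using hwS
  have hwR : ∀ r ∈ R, ∃ m : SP G, Maxi T m ∧ m ∈ Rc r ∧
      ∀ r' ∈ R, r' ≠ r → m ∉ Rc r' := fun r hr => exists_witness hT hR hr
  choose! wR hwRp using hwR
  have hRleg : ∀ p ∈ R, p.1 ≤ p.2 := fun p hp => hT.1 p (hR.1 hp)
  have hcov : ∀ s ∈ S, ∃ r, r ∈ R ∧ wS s ∈ Rc r := by
    intro s hs
    have h1 := (hw s hs).1.1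
    obtain ⟨r, hr, hrc⟩ := indec_mem_Rc hRleg hT (hR.2.2.1 ▸ Set.Subset.rfl)
      (by rw [hR.2.2.1]; exact h1.1) h1.2.1 h1.2.2
    exact ⟨r, hr, hrc⟩
  choose! f hf using hcov
  have hinj : Set.InjOn f S := by
    intro s hsmem s' hs'mem heq
    by_contra hne
    have hrR : f s ∈ R := (hf s hsmem).1
    have h1 : wS s ∈ Rc (f s) := (hf s hsmem).2
    have h2 : wS s' ∈ Rc (f s) := by rw [heq]; exact (hf s' hs'mem).2
    have hrne : (f s).1 ≠ (f s).2 := hR.2.1 (f s) hrR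
    have hrT : f s ∈ T := hR.1 hrR
    have hmaxr := (hwRp (f s) hrR).1
    have h3 : wR (f s) ∈ Rc (f s) := (hwRp (f s) hrR).2.1
    obtain ⟨g, hg⟩ := lemV2 hT (Nat.card (f s).2 - Nat.card (f s).1) (f s) hrT hrne
      (le_refl _) (wS s) (wR (f s)) (hw s hsmem).1 hmaxr h1 h3
    obtain ⟨g', hg'⟩ := lemV2 hT (Nat.card (f s).2 - Nat.card (f s).1) (f s) hrT hrne
      (le_refl _) (wS s') (wR (f s)) (hw s' hs'mem).1 hmaxr h2 h3
    have hkey : wS s' = cnj (g'⁻¹ * g) (wS s) := by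
      have e1 : cnj g'⁻¹ (cnj g' (wS s')) = wS s' := by
        rw [cnj_cnj, inv_mul_cancel, cnj_one]
      rw [← e1, ← hg', hg, cnj_cnj]
    have hmem : wS s' ∈ Rc s := by
      rw [hkey]; exact Rc_cnj_mem (hw s hsmem).2.1 _
    exact (hw s' hs'mem).2.2 s hsmem hne hmem
  exact Set.ncard_le_ncard_of_injOn f (fun a ha => (hf a ha).1) hinj (Set.toFinite R)

end TS

end TSProof


/-- Any two minimal generating sets of a fixed transfer system have the same cardinality,
and consequently the assignment "size of a minimal basis" is a well-defined map to the
natural numbers. -/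
theorem minimal_generating_sets_equicardinal {G : Type*} [Group G] [Finite G] :
    (∀ T S R : Set (Subgroup G × Subgroup G), IsTransferSystem T →
      IsMinGenSet S T → IsMinGenSet R T → S.ncard = R.ncard) ∧
    ∃ m : Set (Subgroup G × Subgroup G) → ℕ,
      ∀ T S : Set (Subgroup G × Subgroup G), IsTransferSystem T →
        IsMinGenSet S T → m T = S.ncard := by
  have main : ∀ T S R : Set (Subgroup G × Subgroup G), IsTransferSystem T →
      IsMinGenSet S T → IsMinGenSet R T → S.ncard = R.ncard := by
    intro T S R hT hS hR
    exact le_antisymm (TSProof.ncard_le_of_minGen hT hS hR)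
      (TSProof.ncard_le_of_minGen hT hR hS)
  refine ⟨main, fun T => sInf {n | ∃ S, IsMinGenSet S T ∧ S.ncard = n}, ?_⟩
  intro T S hT hS
  have hset : {n | ∃ R, IsMinGenSet R T ∧ R.ncard = n} = {S.ncard} := by
    ext n
    simp only [Set.mem_setOf_eq, Set.mem_singleton_iff]
    constructor
    · rintro ⟨R, hR, rfl⟩
      exact (main T S R hT hS hR).symm
    · rintro rfl
      exact ⟨S, hS, rfl⟩
  show sInf {n | ∃ S, IsMinGenSet S T ∧ S.ncard = n} = S.ncard
  rw [hset, csInf_singleton]
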